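/- For every N > 2 there is a constant C = C(N) such that for all a ≥ 0: ∫₀^∞ ∫₀^∞ ⟨r⟩ / ( √(rs) · ⟨r − s⟩² · ⟨s − a⟩^{N} ) dr ds ≤ C. -/

import Mathlib

open MeasureTheory Real Set

lemma s12_sqrt_add_le {a b : ℝ} (ha : 0 ≤ a) (hb : 0 ≤ b) :
    Real.sqrt (a + b) ≤ Real.sqrt a + Real.sqrt b := by
  have h1 := Real.sq_sqrt ha
  have h2 := Real.sq_sqrt hb
  have h3 := Real.sqrt_nonneg a
  have h4 := Real.sqrt_nonneg b
  have h5 : a + b ≤ (Real.sqrt a + Real.sqrt b) ^ 2 := by nlinarith [mul_nonneg h3 h4]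
  calc Real.sqrt (a + b) ≤ Real.sqrt ((Real.sqrt a + Real.sqrt b) ^ 2) := Real.sqrt_le_sqrt h5
    _ = _ := Real.sqrt_sq (by positivity)

lemma s12_int_bracket {q : ℝ} (hq : q < -(1:ℝ)/2) :
    Integrable (fun x : ℝ => (1 + x ^ 2) ^ q) := by
  have hp : (1:ℝ) < -2*q := by linarith
  have h := integrable_rpow_neg_one_add_norm_sq (E := ℝ) (μ := volume) (r := -2*q)
    (by simpa using hp)
  simpa [Real.norm_eq_abs, sq_abs, show -(-2*q)/2 = q by ring] using h

lemma s12_int_bracket_shift {q : ℝ} (hq : q < -(1:ℝ)/2) (c : ℝ) :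
    Integrable (fun x : ℝ => (1 + (x - c) ^ 2) ^ q) :=
  (s12_int_bracket hq).comp_sub_right c

lemma s12_integral_bracket_shift_le {q : ℝ} (hq : q < -(1:ℝ)/2) (c : ℝ) (s : Set ℝ) :
    ∫ x in s, (1 + (x - c) ^ 2) ^ q ≤ ∫ x : ℝ, (1 + x ^ 2) ^ q := by
  calc ∫ x in s, (1 + (x - c) ^ 2) ^ q
      ≤ ∫ x : ℝ, (1 + (x - c) ^ 2) ^ q :=
        setIntegral_le_integral (s12_int_bracket_shift hq c)
          (Filter.Eventually.of_forall fun x => by positivity)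
    _ = ∫ x : ℝ, (1 + x ^ 2) ^ q := by
        simpa using integral_sub_right_eq_self (μ := volume) (fun x : ℝ => (1 + x ^ 2) ^ q) c

lemma s12_int_inv_shift (c : ℝ) : Integrable (fun x : ℝ => (1 + (x - c) ^ 2)⁻¹) :=
  integrable_inv_one_add_sq.comp_sub_right c

lemma s12_integral_inv_shift_le (c : ℝ) (s : Set ℝ) :
    ∫ x in s, (1 + (x - c) ^ 2)⁻¹ ≤ π := by
  calc ∫ x in s, (1 + (x - c) ^ 2)⁻¹
      ≤ ∫ x : ℝ, (1 + (x - c) ^ 2)⁻¹ :=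
        setIntegral_le_integral (s12_int_inv_shift c)
          (Filter.Eventually.of_forall fun x => by positivity)
    _ = π := by
        have h := integral_sub_right_eq_self (μ := volume) (fun x : ℝ => (1 + x ^ 2)⁻¹) c
        simpa [integral_univ_inv_one_add_sq] using h

lemma s12_int_inv_sqrt : IntegrableOn (fun r : ℝ => (Real.sqrt r)⁻¹) (Ioc (0:ℝ) 1) := by
  have h : IntervalIntegrable (fun x : ℝ => x ^ (-(1/2) : ℝ)) volume 0 1 :=
    intervalIntegral.intervalIntegrable_rpow' (by norm_num)
  have h2 : IntegrableOn (fun x : ℝ => x ^ (-(1/2) : ℝ)) (Ioc (0:ℝ) 1) :=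
    (intervalIntegrable_iff_integrableOn_Ioc_of_le zero_le_one).mp h
  refine h2.congr_fun (fun r hr => ?_) measurableSet_Ioc
  beta_reduce
  rw [Real.rpow_neg hr.1.le, Real.sqrt_eq_rpow]

lemma s12_integral_inv_sqrt : ∫ r in Ioc (0:ℝ) 1, (Real.sqrt r)⁻¹ = 2 := by
  have h1 : ∫ r in Ioc (0:ℝ) 1, (Real.sqrt r)⁻¹ = ∫ r in Ioc (0:ℝ) 1, r ^ (-(1/2) : ℝ) :=
    setIntegral_congr_fun measurableSet_Ioc (fun r hr => by
      rw [Real.rpow_neg hr.1.le, Real.sqrt_eq_rpow])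
  rw [h1, ← intervalIntegral.integral_of_le zero_le_one,
    integral_rpow (Or.inl (by norm_num))]
  rw [Real.one_rpow, Real.zero_rpow (by norm_num)]
  norm_num

lemma s12_key3 (x : ℝ) : Real.sqrt |x| / (1 + x ^ 2) ≤ (1 + x ^ 2) ^ (-(3:ℝ)/4) := by
  have hB : (0:ℝ) < 1 + x ^ 2 := by positivity
  have h1 : Real.sqrt |x| ≤ (1 + x ^ 2) ^ ((1:ℝ)/4) := by
    have h2 : |x| ≤ (1 + x ^ 2) ^ ((1:ℝ)/2) := by
      rw [← Real.sqrt_eq_rpow, ← Real.sqrt_sq_eq_abs]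
      exact Real.sqrt_le_sqrt (by nlinarith)
    calc Real.sqrt |x| = |x| ^ ((1:ℝ)/2) := Real.sqrt_eq_rpow _
      _ ≤ ((1 + x ^ 2) ^ ((1:ℝ)/2)) ^ ((1:ℝ)/2) :=
          Real.rpow_le_rpow (abs_nonneg x) h2 (by norm_num)
      _ = (1 + x ^ 2) ^ ((1:ℝ)/4) := by
          rw [← Real.rpow_mul hB.le]; norm_num
  calc Real.sqrt |x| / (1 + x ^ 2) ≤ (1 + x ^ 2) ^ ((1:ℝ)/4) / (1 + x ^ 2) := by gcongr
    _ = (1 + x ^ 2) ^ (-(3:ℝ)/4) := by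
        rw [show (-(3:ℝ)/4) = (1:ℝ)/4 - 1 by norm_num, Real.rpow_sub hB, Real.rpow_one]

lemma s12_algA {n R S B D t u : ℝ} (hR : 0 < R) (hS : 0 < S) (hB : 0 < B) (hD : 0 < D)
    (ht : 0 ≤ t) (hu : 0 ≤ u) (hn : n ≤ Real.sqrt 2) :
    n / (R * S * B * D) ≤ Real.sqrt 2 / D * ((R * S * B)⁻¹ + t + u) := by
  have e1 : Real.sqrt 2 / D * (R * S * B)⁻¹ = Real.sqrt 2 / (R * S * B * D) := by
    field_simp
  calc n / (R * S * B * D) ≤ Real.sqrt 2 / (R * S * B * D) := by gcongr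
    _ = Real.sqrt 2 / D * (R * S * B)⁻¹ := e1.symm
    _ ≤ _ := by
        have h0 : (0:ℝ) ≤ Real.sqrt 2 / D := by positivity
        nlinarith

lemma s12_algB {n R S B D Q T : ℝ} (hR : 0 < R) (hS : 0 < S) (hB : 0 < B) (hD : 0 < D)
    (hQ : 0 ≤ Q) (hT : Q / B ≤ T) (hn : n ≤ Real.sqrt 2 * (R * R)) (hRS : R ≤ S + Q) :
    n / (R * S * B * D) ≤ Real.sqrt 2 / D * ((R * S * B)⁻¹ + B⁻¹ + T / S) := by
  have h2 : (0:ℝ) ≤ Real.sqrt 2 := Real.sqrt_nonneg 2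
  calc n / (R * S * B * D) ≤ (Real.sqrt 2 * (R * R)) / (R * S * B * D) := by gcongr
    _ = Real.sqrt 2 * R / (S * B * D) := by field_simp
    _ ≤ Real.sqrt 2 * (S + Q) / (S * B * D) := by gcongr
    _ = Real.sqrt 2 / D * (B⁻¹ + (Q / B) / S) := by field_simp
    _ ≤ _ := by
        have h1 : (Q / B) / S ≤ T / S := by gcongr
        have h0 : (0:ℝ) ≤ (R * S * B)⁻¹ := by positivity
        have hc : (0:ℝ) ≤ Real.sqrt 2 / D := by positivity
        nlinarith

lemma s12_pointwise {r s : ℝ} (D : ℝ) (hr : 0 < r) (hs : 0 < s) (hD : 0 < D) :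
    Real.sqrt (1 + r ^ 2) / (Real.sqrt (r * s) * (1 + (r - s) ^ 2) * D) ≤
    Real.sqrt 2 / D *
      ((Real.sqrt r * Real.sqrt s * (1 + (r - s) ^ 2))⁻¹ + (1 + (r - s) ^ 2)⁻¹ +
        (1 + (r - s) ^ 2) ^ (-(3:ℝ)/4) / Real.sqrt s) := by
  have hR : 0 < Real.sqrt r := Real.sqrt_pos.mpr hr
  have hS : 0 < Real.sqrt s := Real.sqrt_pos.mpr hs
  have hB : (0:ℝ) < 1 + (r - s) ^ 2 := by positivity
  rw [Real.sqrt_mul hr.le]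
  rcases le_total r 1 with h1 | h1
  · exact s12_algA hR hS hB hD (by positivity) (by positivity)
      (Real.sqrt_le_sqrt (by nlinarith))
  · refine s12_algB hR hS hB hD (Real.sqrt_nonneg _) (s12_key3 (r - s)) ?_ ?_
    · have : Real.sqrt (1 + r ^ 2) ≤ Real.sqrt (2 * r ^ 2) :=
        Real.sqrt_le_sqrt (by nlinarith)
      calc Real.sqrt (1 + r ^ 2) ≤ Real.sqrt (2 * r ^ 2) := this
        _ = Real.sqrt 2 * (Real.sqrt r * Real.sqrt r) := by
            rw [Real.sqrt_mul (by norm_num), Real.sqrt_sq hr.le,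
              Real.mul_self_sqrt hr.le]
    · calc Real.sqrt r ≤ Real.sqrt (s + |r - s|) :=
          Real.sqrt_le_sqrt (by cases abs_cases (r - s) with
            | inl h => linarith [h.1]
            | inr h => linarith [h.1])
        _ ≤ Real.sqrt s + Real.sqrt |r - s| := s12_sqrt_add_le hs.le (abs_nonneg _)


lemma s12_one_le_sqrt {r : ℝ} (h1 : 1 ≤ r) : 1 ≤ Real.sqrt r := by
  have h := Real.sqrt_le_sqrt h1
  simpa using h


lemma s12_t1_bd1 (s : ℝ) (hs : 0 < s) {r : ℝ} (hr : r ∈ Ioc (0:ℝ) 1) :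
    (Real.sqrt r * Real.sqrt s * (1 + (r - s) ^ 2))⁻¹ ≤ (Real.sqrt s)⁻¹ * (Real.sqrt r)⁻¹ := by
  have hR : 0 < Real.sqrt r := Real.sqrt_pos.mpr hr.1
  have hS : 0 < Real.sqrt s := Real.sqrt_pos.mpr hs
  rw [show (Real.sqrt s)⁻¹ * (Real.sqrt r)⁻¹ = (Real.sqrt r * Real.sqrt s)⁻¹ by
    rw [mul_inv]; ring]
  exact inv_anti₀ (by positivity)
    (by nlinarith [mul_nonneg (mul_pos hR hS).le (sq_nonneg (r - s))])

lemma s12_t1_bd2 (s : ℝ) (hs : 0 < s) {r : ℝ} (hr : r ∈ Ioi (1:ℝ)) :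
    (Real.sqrt r * Real.sqrt s * (1 + (r - s) ^ 2))⁻¹
      ≤ (Real.sqrt s)⁻¹ * (1 + (r - s) ^ 2)⁻¹ := by
  have hR : 1 ≤ Real.sqrt r := s12_one_le_sqrt (le_of_lt hr)
  have hS : 0 < Real.sqrt s := Real.sqrt_pos.mpr hs
  have hB : (0:ℝ) < 1 + (r - s) ^ 2 := by positivity
  rw [show (Real.sqrt s)⁻¹ * (1 + (r - s) ^ 2)⁻¹ = (Real.sqrt s * (1 + (r - s) ^ 2))⁻¹ by
    rw [mul_inv]]
  exact inv_anti₀ (by positivity)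
    (by nlinarith [mul_nonneg (mul_nonneg (sub_nonneg.mpr hR) hS.le) hB.le])

lemma s12_t1_int1 (s : ℝ) (hs : 0 < s) :
    IntegrableOn (fun r : ℝ => (Real.sqrt r * Real.sqrt s * (1 + (r - s) ^ 2))⁻¹)
      (Ioc (0:ℝ) 1) := by
  refine Integrable.mono' (s12_int_inv_sqrt.const_mul (Real.sqrt s)⁻¹) ?_ ?_
  · apply Measurable.aestronglyMeasurable; fun_prop
  · rw [ae_restrict_iff' measurableSet_Ioc]
    refine Filter.Eventually.of_forall fun r hr => ?_
    have hR : 0 < Real.sqrt r := Real.sqrt_pos.mpr hr.1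
    have hS : 0 < Real.sqrt s := Real.sqrt_pos.mpr hs
    have hB : (0:ℝ) < 1 + (r - s) ^ 2 := by positivity
    rw [Real.norm_eq_abs, abs_of_nonneg (by positivity)]
    exact s12_t1_bd1 s hs hr

lemma s12_t1_int2 (s : ℝ) (hs : 0 < s) :
    IntegrableOn (fun r : ℝ => (Real.sqrt r * Real.sqrt s * (1 + (r - s) ^ 2))⁻¹)
      (Ioi (1:ℝ)) := by
  refine Integrable.mono' (((s12_int_inv_shift s).const_mul (Real.sqrt s)⁻¹).integrableOn) ?_ ?_
  · apply Measurable.aestronglyMeasurable; fun_prop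
  · rw [ae_restrict_iff' measurableSet_Ioi]
    refine Filter.Eventually.of_forall fun r hr => ?_
    have hr1 : (1:ℝ) < r := hr
    have hR : 1 ≤ Real.sqrt r := s12_one_le_sqrt hr1.le
    have hS : 0 < Real.sqrt s := Real.sqrt_pos.mpr hs
    have hB : (0:ℝ) < 1 + (r - s) ^ 2 := by positivity
    rw [Real.norm_eq_abs, abs_of_nonneg (by positivity)]
    exact s12_t1_bd2 s hs hr


lemma s12_inner (s D : ℝ) (hs : 0 < s) (hD : 0 < D) :
    (∫ r in Ioi (0:ℝ), Real.sqrt (1 + r ^ 2) / (Real.sqrt (r * s) * (1 + (r - s) ^ 2) * D))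
      ≤ Real.sqrt 2 / D *
        (π + (2 + π + (∫ x : ℝ, (1 + x ^ 2) ^ (-(3:ℝ)/4))) / Real.sqrt s) := by
  have hS : 0 < Real.sqrt s := Real.sqrt_pos.mpr hs
  set I3 : ℝ := ∫ x : ℝ, (1 + x ^ 2) ^ (-(3:ℝ)/4) with hI3
  have ht1 : IntegrableOn
      (fun r : ℝ => (Real.sqrt r * Real.sqrt s * (1 + (r - s) ^ 2))⁻¹) (Ioi (0:ℝ)) := by
    rw [← Ioc_union_Ioi_eq_Ioi (zero_le_one (α := ℝ))]
    exact (s12_t1_int1 s hs).union (s12_t1_int2 s hs)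
  have ht2 : IntegrableOn (fun r : ℝ => (1 + (r - s) ^ 2)⁻¹) (Ioi (0:ℝ)) :=
    (s12_int_inv_shift s).integrableOn
  have ht3 : IntegrableOn
      (fun r : ℝ => (1 + (r - s) ^ 2) ^ (-(3:ℝ)/4) / Real.sqrt s) (Ioi (0:ℝ)) :=
    ((s12_int_bracket_shift (by norm_num) s).div_const _).integrableOn
  have hsum : IntegrableOn (fun r : ℝ =>
      (Real.sqrt r * Real.sqrt s * (1 + (r - s) ^ 2))⁻¹ + (1 + (r - s) ^ 2)⁻¹ +
        (1 + (r - s) ^ 2) ^ (-(3:ℝ)/4) / Real.sqrt s) (Ioi (0:ℝ)) :=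
    (ht1.add ht2).add ht3
  have step1 : (∫ r in Ioi (0:ℝ),
      Real.sqrt (1 + r ^ 2) / (Real.sqrt (r * s) * (1 + (r - s) ^ 2) * D))
      ≤ ∫ r in Ioi (0:ℝ), Real.sqrt 2 / D *
        ((Real.sqrt r * Real.sqrt s * (1 + (r - s) ^ 2))⁻¹ + (1 + (r - s) ^ 2)⁻¹ +
          (1 + (r - s) ^ 2) ^ (-(3:ℝ)/4) / Real.sqrt s) := by
    refine integral_mono_of_nonneg ?_ (hsum.const_mul _) ?_
    · exact Filter.Eventually.of_forall fun r => by positivity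
    · exact (ae_restrict_iff' measurableSet_Ioi).mpr
        (Filter.Eventually.of_forall fun r hr => s12_pointwise D hr hs hD)
  have step2 : (∫ r in Ioi (0:ℝ), Real.sqrt 2 / D *
        ((Real.sqrt r * Real.sqrt s * (1 + (r - s) ^ 2))⁻¹ + (1 + (r - s) ^ 2)⁻¹ +
          (1 + (r - s) ^ 2) ^ (-(3:ℝ)/4) / Real.sqrt s))
      = Real.sqrt 2 / D *
        ((∫ r in Ioi (0:ℝ), (Real.sqrt r * Real.sqrt s * (1 + (r - s) ^ 2))⁻¹) +
         (∫ r in Ioi (0:ℝ), (1 + (r - s) ^ 2)⁻¹) +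
         (∫ r in Ioi (0:ℝ), (1 + (r - s) ^ 2) ^ (-(3:ℝ)/4) / Real.sqrt s)) := by
    have h12 : IntegrableOn (fun r : ℝ =>
        (Real.sqrt r * Real.sqrt s * (1 + (r - s) ^ 2))⁻¹ + (1 + (r - s) ^ 2)⁻¹)
        (Ioi (0:ℝ)) := ht1.add ht2
    rw [integral_const_mul, integral_add h12 ht3, integral_add ht1 ht2]
  have bound1 : (∫ r in Ioi (0:ℝ), (Real.sqrt r * Real.sqrt s * (1 + (r - s) ^ 2))⁻¹)
      ≤ (Real.sqrt s)⁻¹ * 2 + (Real.sqrt s)⁻¹ * π := by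
    rw [← Ioc_union_Ioi_eq_Ioi (zero_le_one (α := ℝ)),
      setIntegral_union Ioc_disjoint_Ioi_same measurableSet_Ioi
        (s12_t1_int1 s hs) (s12_t1_int2 s hs)]
    have b1 : (∫ r in Ioc (0:ℝ) 1, (Real.sqrt r * Real.sqrt s * (1 + (r - s) ^ 2))⁻¹)
        ≤ (Real.sqrt s)⁻¹ * 2 := by
      calc (∫ r in Ioc (0:ℝ) 1, (Real.sqrt r * Real.sqrt s * (1 + (r - s) ^ 2))⁻¹)
          ≤ ∫ r in Ioc (0:ℝ) 1, (Real.sqrt s)⁻¹ * (Real.sqrt r)⁻¹ :=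
            setIntegral_mono_on (s12_t1_int1 s hs) (s12_int_inv_sqrt.const_mul _)
              measurableSet_Ioc (fun r hr => s12_t1_bd1 s hs hr)
        _ = (Real.sqrt s)⁻¹ * ∫ r in Ioc (0:ℝ) 1, (Real.sqrt r)⁻¹ := integral_const_mul _ _
        _ = (Real.sqrt s)⁻¹ * 2 := by rw [s12_integral_inv_sqrt]
    have b2 : (∫ r in Ioi (1:ℝ), (Real.sqrt r * Real.sqrt s * (1 + (r - s) ^ 2))⁻¹)
        ≤ (Real.sqrt s)⁻¹ * π := by
      calc (∫ r in Ioi (1:ℝ), (Real.sqrt r * Real.sqrt s * (1 + (r - s) ^ 2))⁻¹)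
          ≤ ∫ r in Ioi (1:ℝ), (Real.sqrt s)⁻¹ * (1 + (r - s) ^ 2)⁻¹ :=
            setIntegral_mono_on (s12_t1_int2 s hs)
              (((s12_int_inv_shift s).const_mul _).integrableOn)
              measurableSet_Ioi (fun r hr => s12_t1_bd2 s hs hr)
        _ = (Real.sqrt s)⁻¹ * ∫ r in Ioi (1:ℝ), (1 + (r - s) ^ 2)⁻¹ := integral_const_mul _ _
        _ ≤ (Real.sqrt s)⁻¹ * π :=
            mul_le_mul_of_nonneg_left (s12_integral_inv_shift_le s _) (by positivity)
    linarith
  have bound2 : (∫ r in Ioi (0:ℝ), (1 + (r - s) ^ 2)⁻¹) ≤ π :=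
    s12_integral_inv_shift_le s _
  have bound3 : (∫ r in Ioi (0:ℝ), (1 + (r - s) ^ 2) ^ (-(3:ℝ)/4) / Real.sqrt s)
      ≤ I3 / Real.sqrt s := by
    rw [integral_div]
    have h := s12_integral_bracket_shift_le (q := -(3:ℝ)/4) (by norm_num) s (Ioi (0:ℝ))
    rw [hI3]
    gcongr
  calc (∫ r in Ioi (0:ℝ),
      Real.sqrt (1 + r ^ 2) / (Real.sqrt (r * s) * (1 + (r - s) ^ 2) * D))
      ≤ Real.sqrt 2 / D *
        ((∫ r in Ioi (0:ℝ), (Real.sqrt r * Real.sqrt s * (1 + (r - s) ^ 2))⁻¹) +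
         (∫ r in Ioi (0:ℝ), (1 + (r - s) ^ 2)⁻¹) +
         (∫ r in Ioi (0:ℝ), (1 + (r - s) ^ 2) ^ (-(3:ℝ)/4) / Real.sqrt s)) :=
        step2 ▸ step1
    _ ≤ Real.sqrt 2 / D * (π + (2 + π + I3) / Real.sqrt s) := by
        refine mul_le_mul_of_nonneg_left ?_ (by positivity)
        have e : (Real.sqrt s)⁻¹ * 2 + (Real.sqrt s)⁻¹ * π + π + I3 / Real.sqrt s
            = π + (2 + π + I3) / Real.sqrt s := by ring
        linarith


lemma s12_Dinv (N x : ℝ) : (Real.sqrt (1 + x ^ 2) ^ N)⁻¹ = (1 + x ^ 2) ^ (-N/2) := by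
  have h0 : (0:ℝ) ≤ 1 + x ^ 2 := by positivity
  rw [Real.sqrt_eq_rpow, ← Real.rpow_mul h0, ← Real.rpow_neg h0]
  congr 1
  ring

lemma s12_W_le_one {q : ℝ} (hq : q < -(1:ℝ)/2) (y : ℝ) : (1 + y ^ 2) ^ q ≤ 1 :=
  Real.rpow_le_one_of_one_le_of_nonpos (by nlinarith [sq_nonneg y]) (by linarith)

lemma s12_W_int (q : ℝ) (hq : q < -(1:ℝ)/2) (a : ℝ) :
    IntegrableOn (fun s : ℝ => (Real.sqrt s)⁻¹ * (1 + (s - a) ^ 2) ^ q) (Ioi (0:ℝ)) := by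
  rw [← Ioc_union_Ioi_eq_Ioi (zero_le_one (α := ℝ))]
  refine IntegrableOn.union ?_ ?_
  · refine Integrable.mono' s12_int_inv_sqrt ?_ ?_
    · apply Measurable.aestronglyMeasurable; fun_prop
    · refine (ae_restrict_iff' measurableSet_Ioc).mpr
        (Filter.Eventually.of_forall fun s hs => ?_)
      have h1 : (0:ℝ) < Real.sqrt s := Real.sqrt_pos.mpr hs.1
      have h2 := s12_W_le_one hq (s - a)
      have h3 : (0:ℝ) ≤ (1 + (s - a) ^ 2) ^ q := Real.rpow_nonneg (by positivity) q
      rw [Real.norm_eq_abs, abs_of_nonneg (by positivity)]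
      nlinarith [inv_pos.mpr h1]
  · refine Integrable.mono' ((s12_int_bracket_shift hq a).integrableOn) ?_ ?_
    · apply Measurable.aestronglyMeasurable; fun_prop
    · refine (ae_restrict_iff' measurableSet_Ioi).mpr
        (Filter.Eventually.of_forall fun s hs => ?_)
      have h1 : (1:ℝ) ≤ Real.sqrt s := s12_one_le_sqrt (le_of_lt hs)
      have h3 : (0:ℝ) ≤ (1 + (s - a) ^ 2) ^ q := Real.rpow_nonneg (by positivity) q
      have h4 : (Real.sqrt s)⁻¹ ≤ 1 := by
        rw [inv_le_one_iff₀]; right; exact h1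
      rw [Real.norm_eq_abs, abs_of_nonneg (by positivity)]
      nlinarith

lemma s12_W_integral_le (q : ℝ) (hq : q < -(1:ℝ)/2) (a : ℝ) :
    (∫ s in Ioi (0:ℝ), (Real.sqrt s)⁻¹ * (1 + (s - a) ^ 2) ^ q)
      ≤ 2 + ∫ x : ℝ, (1 + x ^ 2) ^ q := by
  have hpc1 : IntegrableOn (fun s : ℝ => (Real.sqrt s)⁻¹ * (1 + (s - a) ^ 2) ^ q)
      (Ioc (0:ℝ) 1) := (s12_W_int q hq a).mono_set Ioc_subset_Ioi_self
  have hpc2 : IntegrableOn (fun s : ℝ => (Real.sqrt s)⁻¹ * (1 + (s - a) ^ 2) ^ q)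
      (Ioi (1:ℝ)) := (s12_W_int q hq a).mono_set (Ioi_subset_Ioi zero_le_one)
  rw [← Ioc_union_Ioi_eq_Ioi (zero_le_one (α := ℝ)),
    setIntegral_union Ioc_disjoint_Ioi_same measurableSet_Ioi hpc1 hpc2]
  have b1 : (∫ s in Ioc (0:ℝ) 1, (Real.sqrt s)⁻¹ * (1 + (s - a) ^ 2) ^ q) ≤ 2 := by
    calc (∫ s in Ioc (0:ℝ) 1, (Real.sqrt s)⁻¹ * (1 + (s - a) ^ 2) ^ q)
        ≤ ∫ s in Ioc (0:ℝ) 1, (Real.sqrt s)⁻¹ :=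
          setIntegral_mono_on hpc1 s12_int_inv_sqrt measurableSet_Ioc (fun s hs => by
            have h1 : (0:ℝ) < Real.sqrt s := Real.sqrt_pos.mpr hs.1
            have h2 := s12_W_le_one hq (s - a)
            have h3 : (0:ℝ) ≤ (1 + (s - a) ^ 2) ^ q := Real.rpow_nonneg (by positivity) q
            nlinarith [inv_pos.mpr h1])
      _ = 2 := s12_integral_inv_sqrt
  have b2 : (∫ s in Ioi (1:ℝ), (Real.sqrt s)⁻¹ * (1 + (s - a) ^ 2) ^ q)
      ≤ ∫ x : ℝ, (1 + x ^ 2) ^ q := by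
    calc (∫ s in Ioi (1:ℝ), (Real.sqrt s)⁻¹ * (1 + (s - a) ^ 2) ^ q)
        ≤ ∫ s in Ioi (1:ℝ), (1 + (s - a) ^ 2) ^ q :=
          setIntegral_mono_on hpc2 ((s12_int_bracket_shift hq a).integrableOn)
            measurableSet_Ioi (fun s hs => by
              have h1 : (1:ℝ) ≤ Real.sqrt s := s12_one_le_sqrt (le_of_lt hs)
              have h3 : (0:ℝ) ≤ (1 + (s - a) ^ 2) ^ q := Real.rpow_nonneg (by positivity) q
              have h4 : (Real.sqrt s)⁻¹ ≤ 1 := by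
                rw [inv_le_one_iff₀]; right; exact h1
              nlinarith)
      _ ≤ ∫ x : ℝ, (1 + x ^ 2) ^ q := s12_integral_bracket_shift_le hq a _
  linarith

/-- for `N > 2`,
`∫₀^∞ ∫₀^∞ ⟨r⟩ / (√(rs) ⟨r-s⟩² ⟨s-a⟩^N) dr ds ≤ C` uniformly in `a ≥ 0`. -/
theorem stmt_12 (N : ℝ) (hN : 2 < N) :
    ∃ C : ℝ, 0 < C ∧ ∀ a : ℝ, 0 ≤ a →
      (∫ s in Set.Ioi (0:ℝ), ∫ r in Set.Ioi (0:ℝ),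
          Real.sqrt (1 + r ^ 2) /
            (Real.sqrt (r * s) * (1 + (r - s) ^ 2) * Real.sqrt (1 + (s - a) ^ 2) ^ N))
        ≤ C := by
  have hπ := Real.pi_pos
  have hqN : -N/2 < -(1:ℝ)/2 := by linarith
  set I3 : ℝ := ∫ x : ℝ, (1 + x ^ 2) ^ (-(3:ℝ)/4) with hI3def
  set IN : ℝ := ∫ x : ℝ, (1 + x ^ 2) ^ (-N/2) with hINdef
  have hI3 : 0 ≤ I3 := by
    rw [hI3def]; exact integral_nonneg fun x => Real.rpow_nonneg (by positivity) _
  have hIN : 0 ≤ IN := by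
    rw [hINdef]; exact integral_nonneg fun x => Real.rpow_nonneg (by positivity) _
  have hs2 : (0:ℝ) ≤ Real.sqrt 2 := Real.sqrt_nonneg 2
  refine ⟨Real.sqrt 2 * π * IN + Real.sqrt 2 * (2 + π + I3) * (2 + IN) + 1, ?_, fun a _ => ?_⟩
  · have h1 : 0 ≤ Real.sqrt 2 * π * IN := mul_nonneg (mul_nonneg hs2 hπ.le) hIN
    have h2 : 0 ≤ Real.sqrt 2 * (2 + π + I3) * (2 + IN) :=
      mul_nonneg (mul_nonneg hs2 (by linarith)) (by linarith)
    linarith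
  · have hWint : IntegrableOn (fun s : ℝ => (1 + (s - a) ^ 2) ^ (-N/2)) (Ioi (0:ℝ)) :=
      (s12_int_bracket_shift hqN a).integrableOn
    have hWs := s12_W_int (-N/2) hqN a
    have hga : IntegrableOn
        (fun s : ℝ => Real.sqrt 2 * π * (1 + (s - a) ^ 2) ^ (-N/2)) (Ioi (0:ℝ)) :=
      hWint.const_mul _
    have hgb : IntegrableOn (fun s : ℝ =>
        Real.sqrt 2 * (2 + π + I3) * ((Real.sqrt s)⁻¹ * (1 + (s - a) ^ 2) ^ (-N/2)))
        (Ioi (0:ℝ)) := hWs.const_mul _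
    have hg : IntegrableOn (fun s : ℝ =>
        Real.sqrt 2 * π * (1 + (s - a) ^ 2) ^ (-N/2) +
        Real.sqrt 2 * (2 + π + I3) * ((Real.sqrt s)⁻¹ * (1 + (s - a) ^ 2) ^ (-N/2)))
        (Ioi (0:ℝ)) := hga.add hgb
    have hle : ∀ s ∈ Ioi (0:ℝ),
        (∫ r in Set.Ioi (0:ℝ), Real.sqrt (1 + r ^ 2) /
            (Real.sqrt (r * s) * (1 + (r - s) ^ 2) * Real.sqrt (1 + (s - a) ^ 2) ^ N))
          ≤ Real.sqrt 2 * π * (1 + (s - a) ^ 2) ^ (-N/2) +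
            Real.sqrt 2 * (2 + π + I3) * ((Real.sqrt s)⁻¹ * (1 + (s - a) ^ 2) ^ (-N/2)) := by
      intro s hs
      have hD : 0 < Real.sqrt (1 + (s - a) ^ 2) ^ N :=
        Real.rpow_pos_of_pos (Real.sqrt_pos.mpr (by positivity)) N
      refine (s12_inner s _ hs hD).trans_eq ?_
      rw [div_eq_mul_inv, s12_Dinv N (s - a), ← hI3def]
      ring
    calc (∫ s in Set.Ioi (0:ℝ), ∫ r in Set.Ioi (0:ℝ),
          Real.sqrt (1 + r ^ 2) /
            (Real.sqrt (r * s) * (1 + (r - s) ^ 2) * Real.sqrt (1 + (s - a) ^ 2) ^ N))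
        ≤ ∫ s in Set.Ioi (0:ℝ),
            (Real.sqrt 2 * π * (1 + (s - a) ^ 2) ^ (-N/2) +
             Real.sqrt 2 * (2 + π + I3) * ((Real.sqrt s)⁻¹ * (1 + (s - a) ^ 2) ^ (-N/2))) := by
          refine integral_mono_of_nonneg ?_ hg ?_
          · exact Filter.Eventually.of_forall fun s => integral_nonneg fun r => by positivity
          · exact (ae_restrict_iff' measurableSet_Ioi).mpr
              (Filter.Eventually.of_forall hle)
      _ = Real.sqrt 2 * π * (∫ s in Ioi (0:ℝ), (1 + (s - a) ^ 2) ^ (-N/2)) +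
          Real.sqrt 2 * (2 + π + I3) *
            (∫ s in Ioi (0:ℝ), (Real.sqrt s)⁻¹ * (1 + (s - a) ^ 2) ^ (-N/2)) := by
          rw [integral_add hga hgb, integral_const_mul, integral_const_mul]
      _ ≤ Real.sqrt 2 * π * IN + Real.sqrt 2 * (2 + π + I3) * (2 + IN) + 1 := by
          have e1 : (∫ s in Ioi (0:ℝ), (1 + (s - a) ^ 2) ^ (-N/2)) ≤ IN := by
            rw [hINdef]; exact s12_integral_bracket_shift_le hqN a _
          have e2 : (∫ s in Ioi (0:ℝ), (Real.sqrt s)⁻¹ * (1 + (s - a) ^ 2) ^ (-N/2))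
              ≤ 2 + IN := by
            rw [hINdef]; exact s12_W_integral_le (-N/2) hqN a
          have c1 : (0:ℝ) ≤ Real.sqrt 2 * π := mul_nonneg hs2 hπ.le
          have c2 : (0:ℝ) ≤ Real.sqrt 2 * (2 + π + I3) := mul_nonneg hs2 (by linarith)
          nlinarith [mul_le_mul_of_nonneg_left e1 c1, mul_le_mul_of_nonneg_left e2 c2]
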